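/- Propositional Craig interpolation for partitioned sequents: if a quantifier-free sequent Γ₁ ; Γ₂ ⊢ Δ₁ ; Δ₂ (whose logical meaning is Γ₁, Γ₂ ⊢ Δ₁, Δ₂) is a tautology, then there exists a quantifier-free formula I such that (1) both Γ₁ ⊢ Δ₁, I and I, Γ₂ ⊢ Δ₂ are tautologies, and (2) every atom that appears in I appears both in Γ₁ ⊢ Δ₁ and in Γ₂ ⊢ Δ₂. -/

import Mathlib

/-- Quantifier-free (propositional) formulas over atoms of type `A`. -/
inductive PropForm (A : Type) : Type where
  | atom : A → PropForm A
  | verum : PropForm A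
  | falsum : PropForm A
  | neg : PropForm A → PropForm A
  | and : PropForm A → PropForm A → PropForm A
  | or : PropForm A → PropForm A → PropForm A
  | imp : PropForm A → PropForm A → PropForm A

namespace PropForm

variable {A : Type}

/-- Evaluation of a propositional formula under an assignment of truth values to atoms. -/
def eval (v : A → Prop) : PropForm A → Prop
  | atom a => v a
  | verum => True
  | falsum => False
  | neg φ => ¬ eval v φ
  | and φ ψ => eval v φ ∧ eval v ψ
  | or φ ψ => eval v φ ∨ eval v ψ
  | imp φ ψ => eval v φ → eval v ψ

/-- The set of atoms appearing in a formula. -/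
def atoms : PropForm A → Set A
  | atom a => {a}
  | verum => ∅
  | falsum => ∅
  | neg φ => atoms φ
  | and φ ψ => atoms φ ∪ atoms ψ
  | or φ ψ => atoms φ ∪ atoms ψ
  | imp φ ψ => atoms φ ∪ atoms ψ

/-- A sequent `Γ ⊢ Δ` is a tautology iff, under every assignment, if all formulas of `Γ`
hold then some formula of `Δ` holds. -/
def SeqTaut (Γ Δ : List (PropForm A)) : Prop :=
  ∀ v : A → Prop, (∀ φ ∈ Γ, eval v φ) → ∃ ψ ∈ Δ, eval v ψ

/-- The atoms appearing in a sequent. -/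
def seqAtoms (Γ Δ : List (PropForm A)) : Set A :=
  (⋃ φ ∈ Γ, atoms φ) ∪ ⋃ ψ ∈ Δ, atoms ψ

end PropForm

open PropForm


open Classical
namespace Interp
variable {A : Type}

def atomList : PropForm A → List A
  | .atom a => [a]
  | .verum => []
  | .falsum => []
  | .neg φ => atomList φ
  | .and φ ψ => atomList φ ++ atomList ψ
  | .or φ ψ => atomList φ ++ atomList ψ
  | .imp φ ψ => atomList φ ++ atomList ψ

lemma mem_atomList {a : A} : ∀ {φ : PropForm A}, a ∈ atomList φ ↔ a ∈ atoms φ := by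
  intro φ
  induction φ <;> simp [atomList, atoms, *]

lemma eval_congr {v w : A → Prop} : ∀ {φ : PropForm A},
    (∀ a ∈ atoms φ, (v a ↔ w a)) → (eval v φ ↔ eval w φ) := by
  intro φ
  induction φ with
  | atom a => intro h; exact h a (by simp [atoms])
  | verum => intro _; rfl
  | falsum => intro _; rfl
  | neg φ ih => intro h; simp only [eval]; rw [ih h]
  | and φ ψ ih₁ ih₂ =>
      intro h; simp only [eval]
      rw [ih₁ (fun a ha => h a (Or.inl ha)), ih₂ (fun a ha => h a (Or.inr ha))]
  | or φ ψ ih₁ ih₂ =>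
      intro h; simp only [eval]
      rw [ih₁ (fun a ha => h a (Or.inl ha)), ih₂ (fun a ha => h a (Or.inr ha))]
  | imp φ ψ ih₁ ih₂ =>
      intro h; simp only [eval]
      rw [ih₁ (fun a ha => h a (Or.inl ha)), ih₂ (fun a ha => h a (Or.inr ha))]

noncomputable def clause (s : List A) : List A → PropForm A
  | [] => .verum
  | a :: L => .and (if a ∈ s then .atom a else .neg (.atom a)) (clause s L)

lemma eval_clause {v : A → Prop} {s : List A} : ∀ {L : List A},
    eval v (clause s L) ↔ ∀ a ∈ L, (v a ↔ a ∈ s) := by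
  intro L
  induction L with
  | nil => simp [clause, eval]
  | cons a L ih =>
      by_cases hs : a ∈ s <;>
        simp only [clause, eval, hs, ih, List.forall_mem_cons, if_pos, if_neg,
          not_false_iff] <;> tauto

lemma atoms_clause {s : List A} : ∀ {L : List A}, atoms (clause s L) ⊆ {a | a ∈ L} := by
  intro L
  induction L with
  | nil => simp [clause, atoms]
  | cons a L ih =>
      intro x hx
      rcases hx with hx | hx
      · by_cases hs : a ∈ s <;> simp_all [atoms]
      · exact List.mem_cons_of_mem a (ih hx)

noncomputable def bigOr : List (PropForm A) → PropForm A
  | [] => .falsum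
  | φ :: l => .or φ (bigOr l)

lemma eval_bigOr {v : A → Prop} : ∀ {l : List (PropForm A)},
    eval v (bigOr l) ↔ ∃ φ ∈ l, eval v φ := by
  intro l
  induction l with
  | nil => simp [bigOr, eval]
  | cons φ l ih => simp [bigOr, eval, ih]

lemma atoms_bigOr {l : List (PropForm A)} : atoms (bigOr l) ⊆ ⋃ φ ∈ l, atoms φ := by
  induction l with
  | nil => simp [bigOr, atoms]
  | cons φ l ih =>
      intro x hx
      rcases hx with hx | hx
      · simp only [Set.mem_iUnion]; exact ⟨φ, by simp, hx⟩
      · have := ih hx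
        simp only [Set.mem_iUnion] at this ⊢
        obtain ⟨ψ, hψ, hx⟩ := this
        exact ⟨ψ, by simp [hψ], hx⟩

end Interp


/-- **propositional Craig interpolation for partitioned sequents.**
If the quantifier-free sequent `Γ₁ ; Γ₂ ⊢ Δ₁ ; Δ₂` (whose logical meaning is
`Γ₁, Γ₂ ⊢ Δ₁, Δ₂`) is a tautology, then there is a quantifier-free formula `I` such that
(1) both `Γ₁ ⊢ Δ₁, I` and `I, Γ₂ ⊢ Δ₂` are tautologies, and
(2) every atom appearing in `I` appears both in `Γ₁ ⊢ Δ₁` and in `Γ₂ ⊢ Δ₂`. -/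
theorem propositional_interpolation {A : Type}
    (Γ₁ Γ₂ Δ₁ Δ₂ : List (PropForm A))
    (h : SeqTaut (Γ₁ ++ Γ₂) (Δ₁ ++ Δ₂)) :
    ∃ I : PropForm A,
      SeqTaut Γ₁ (Δ₁ ++ [I]) ∧
      SeqTaut (I :: Γ₂) Δ₂ ∧
      atoms I ⊆ seqAtoms Γ₁ Δ₁ ∧ atoms I ⊆ seqAtoms Γ₂ Δ₂ := by
  classical
  set side1 : List A := (Γ₁ ++ Δ₁).flatMap Interp.atomList with hside1
  set side2 : List A := (Γ₂ ++ Δ₂).flatMap Interp.atomList with hside2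
  set L : List A := side1.filter (fun a => decide (a ∈ side2)) with hL
  have memL : ∀ a : A, a ∈ L ↔ a ∈ side1 ∧ a ∈ side2 := by
    intro a; simp [hL, List.mem_filter]
  -- atoms of formulas in a list are in the corresponding side list
  have mem_side : ∀ (Γ Δ : List (PropForm A)) (φ : PropForm A) (a : A),
      φ ∈ Γ ++ Δ → a ∈ atoms φ → a ∈ (Γ ++ Δ).flatMap Interp.atomList := by
    intro Γ Δ φ a hφ ha
    exact List.mem_flatMap.mpr ⟨φ, hφ, Interp.mem_atomList.mpr ha⟩
  have side_sub : ∀ (Γ Δ : List (PropForm A)) (a : A),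
      a ∈ (Γ ++ Δ).flatMap Interp.atomList → a ∈ seqAtoms Γ Δ := by
    intro Γ Δ a ha
    obtain ⟨φ, hφ, ha⟩ := List.mem_flatMap.mp ha
    have ha' : a ∈ atoms φ := Interp.mem_atomList.mp ha
    rcases List.mem_append.mp hφ with hφ | hφ
    · exact Or.inl (Set.mem_biUnion hφ ha')
    · exact Or.inr (Set.mem_biUnion hφ ha')
  set Good : List A → Prop := fun s =>
    ∃ w : A → Prop, (∀ a ∈ L, (w a ↔ a ∈ s)) ∧ (∀ φ ∈ Γ₁, eval w φ) ∧
      (∀ ψ ∈ Δ₁, ¬ eval w ψ) with hGood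
  set I : PropForm A :=
    Interp.bigOr ((L.sublists.filter (fun s => decide (Good s))).map
      (fun s => Interp.clause s L)) with hI
  refine ⟨I, ?_, ?_, ?_, ?_⟩
  · -- Γ₁ ⊢ Δ₁, I
    intro v hv
    by_cases hΔ : ∃ ψ ∈ Δ₁, eval v ψ
    · obtain ⟨ψ, hψ, he⟩ := hΔ
      exact ⟨ψ, List.mem_append_left _ hψ, he⟩
    · push_neg at hΔ
      refine ⟨I, List.mem_append_right _ (by simp), ?_⟩
      set s : List A := L.filter (fun a => decide (v a)) with hs
      have hmem : ∀ a ∈ L, (v a ↔ a ∈ s) := by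
        intro a ha
        simp [hs, List.mem_filter, ha]
      have hgood : Good s := ⟨v, hmem, hv, hΔ⟩
      rw [hI, Interp.eval_bigOr]
      refine ⟨Interp.clause s L, ?_, Interp.eval_clause.mpr hmem⟩
      refine List.mem_map.mpr ⟨s, ?_, rfl⟩
      refine List.mem_filter.mpr ⟨List.mem_sublists.mpr (List.filter_sublist (l := L)), by simp [hgood]⟩
  · -- I, Γ₂ ⊢ Δ₂
    intro v hv
    have hIv : eval v I := hv I (by simp)
    have hΓ₂ : ∀ φ ∈ Γ₂, eval v φ := fun φ hφ => hv φ (by simp [hφ])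
    rw [hI, Interp.eval_bigOr] at hIv
    obtain ⟨χ, hχ, hχv⟩ := hIv
    obtain ⟨s, hsmem, rfl⟩ := List.mem_map.mp hχ
    have hgood : Good s := by
      have := (List.mem_filter.mp hsmem).2
      simpa using this
    obtain ⟨w, hw, hwΓ₁, hwΔ₁⟩ := hgood
    have hvL : ∀ a ∈ L, (v a ↔ a ∈ s) := Interp.eval_clause.mp hχv
    set u : A → Prop := fun a => if a ∈ side1 then w a else v a with hu
    have hu1 : ∀ a ∈ side1, (u a ↔ w a) := by
      intro a ha; simp [hu, ha]
    have hu2 : ∀ a ∈ side2, (u a ↔ v a) := by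
      intro a ha
      by_cases h1 : a ∈ side1
      · have haL : a ∈ L := (memL a).mpr ⟨h1, ha⟩
        simp only [hu, if_pos h1]
        rw [hw a haL, hvL a haL]
      · simp [hu, h1]
    have huΓ : ∀ φ ∈ Γ₁ ++ Γ₂, eval u φ := by
      intro φ hφ
      rcases List.mem_append.mp hφ with hφ | hφ
      · exact (Interp.eval_congr (fun a ha =>
          hu1 a (mem_side Γ₁ Δ₁ φ a (List.mem_append_left _ hφ) ha))).mpr (hwΓ₁ φ hφ)
      · exact (Interp.eval_congr (fun a ha =>
          hu2 a (mem_side Γ₂ Δ₂ φ a (List.mem_append_left _ hφ) ha))).mpr (hΓ₂ φ hφ)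
    obtain ⟨ψ, hψ, hψu⟩ := h u huΓ
    rcases List.mem_append.mp hψ with hψ | hψ
    · exact absurd ((Interp.eval_congr (fun a ha =>
        hu1 a (mem_side Γ₁ Δ₁ ψ a (List.mem_append_right _ hψ) ha))).mp hψu)
        (hwΔ₁ ψ hψ)
    · exact ⟨ψ, hψ, (Interp.eval_congr (fun a ha =>
        hu2 a (mem_side Γ₂ Δ₂ ψ a (List.mem_append_right _ hψ) ha))).mp hψu⟩
  · -- atoms I ⊆ seqAtoms Γ₁ Δ₁
    intro a ha
    have := Interp.atoms_bigOr ha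
    simp only [Set.mem_iUnion] at this
    obtain ⟨φ, hφ, ha'⟩ := this
    obtain ⟨s, _, rfl⟩ := List.mem_map.mp hφ
    have haL : a ∈ L := Interp.atoms_clause ha'
    exact side_sub Γ₁ Δ₁ a ((memL a).mp haL).1
  · intro a ha
    have := Interp.atoms_bigOr ha
    simp only [Set.mem_iUnion] at this
    obtain ⟨φ, hφ, ha'⟩ := this
    obtain ⟨s, _, rfl⟩ := List.mem_map.mp hφ
    have haL : a ∈ L := Interp.atoms_clause ha'
    exact side_sub Γ₂ Δ₂ a ((memL a).mp haL).2
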